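/- Consider horizon T ≥ 1 and the COLDQ setup with strongly convex losses: 𝒳 ⊆ ℝ^p convex with ‖x − y‖ ≤ R for all x, y ∈ 𝒳 (R > 0); for some μ > 0 and all t, the loss f_t : 𝒳 → ℝ admits a gradient/subgradient map ∇f_t with ‖∇f_t(x)‖ ≤ D and f_t(y) ≥ f_t(x) + ⟨∇f_t(x), y − x⟩ + μ·‖y − x‖² for all x, y ∈ 𝒳; convex constraints g_t^n with |g_t^n(x)| ≤ G on 𝒳; step sizes α_t = μ·t; nonnegative queues Q_{t−1}^n ≥ 0; x_1 ∈ 𝒳 arbitrary, and for t ∈ {2,…,T}: x_t minimizes Φ_t(x) = ⟨∇f_{t−1}(x_{t−1}), x − x_{t−1}⟩ + α_{t−1}·‖x − x_{t−1}‖² + Σ_{n=1}^N Q_{t−1}^n·[g_{t−1}^n(x)]_+ over 𝒳. Let x* ∈ 𝒳 satisfy g_t^n(x*) ≤ 0 for all t, n. Then the static regret satisfies Σ_{t=1}^T [f_t(x_t) − f_t(x*)] ≤ (D²/(4μ))·Σ_{t=1}^T (1/t) + D·R ≤ (D²/(4μ))·(1 + ln T) + D·R. -/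

import Mathlib

open scoped RealInnerProductSpace

/-- Minimizing a function of the form `⟪c, · - a⟫ + A‖· - a‖² + h` (with `h`
convex along segments) over a convex set yields the strengthened optimality
inequality with the extra `A‖y - u‖²` term. -/
lemma strong_min_aux {E : Type*} [NormedAddCommGroup E] [InnerProductSpace ℝ E]
    {𝒳 : Set E} (hXconv : Convex ℝ 𝒳)
    (c a : E) (A : ℝ) (hA : 0 ≤ A) (h : E → ℝ)
    (u : E) (hu : u ∈ 𝒳) (y : E) (hy : y ∈ 𝒳)
    (hh : ∀ l : ℝ, 0 ≤ l → l ≤ 1 → h ((1 - l) • u + l • y) ≤ (1 - l) * h u + l * h y)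
    (hmin : ∀ z ∈ 𝒳, ⟪c, u - a⟫ + A * ‖u - a‖ ^ 2 + h u ≤
      ⟪c, z - a⟫ + A * ‖z - a‖ ^ 2 + h z) :
    ⟪c, u - a⟫ + A * ‖u - a‖ ^ 2 + h u + A * ‖y - u‖ ^ 2 ≤
      ⟪c, y - a⟫ + A * ‖y - a‖ ^ 2 + h y := by
  have hexp_y : ‖y - a‖ ^ 2 = ‖u - a‖ ^ 2 + 2 * ⟪u - a, y - u⟫ + ‖y - u‖ ^ 2 := by
    have : y - a = (u - a) + (y - u) := by abel
    rw [this, @norm_add_sq_real]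
  have hinner_y : ⟪c, y - a⟫ = ⟪c, u - a⟫ + ⟪c, y - u⟫ := by
    have : y - a = (u - a) + (y - u) := by abel
    rw [this, inner_add_right]
  refine le_of_forall_pos_le_add fun ε hε => ?_
  rcases eq_or_lt_of_le (by positivity : (0:ℝ) ≤ A * ‖y - u‖ ^ 2) with hc | hc
  · have := hmin y hy
    linarith [hε]
  · set l : ℝ := min 1 (ε / (A * ‖y - u‖ ^ 2)) with hl
    have hl0 : 0 < l := lt_min one_pos (by positivity)
    have hl1 : l ≤ 1 := min_le_left _ _
    have hlc : l * (A * ‖y - u‖ ^ 2) ≤ ε := by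
      rw [← le_div_iff₀ hc]
      exact min_le_right _ _
    set z : E := u + l • (y - u) with hzdef
    have hzeq : z = (1 - l) • u + l • y := by
      rw [hzdef]; module
    have hz : z ∈ 𝒳 := by
      rw [hzeq]
      exact hXconv hu hy (by linarith) (le_of_lt hl0) (by ring)
    have hhz : h z ≤ (1 - l) * h u + l * h y := by
      rw [hzeq]; exact hh l (le_of_lt hl0) hl1
    have hinner_z : ⟪c, z - a⟫ = ⟪c, u - a⟫ + l * ⟪c, y - u⟫ := by
      have : z - a = (u - a) + l • (y - u) := by rw [hzdef]; abel
      rw [this, inner_add_right, real_inner_smul_right]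
    have hnorm_z : ‖z - a‖ ^ 2 = ‖u - a‖ ^ 2 + 2 * l * ⟪u - a, y - u⟫
        + l ^ 2 * ‖y - u‖ ^ 2 := by
      have h1 : z - a = (u - a) + l • (y - u) := by rw [hzdef]; abel
      rw [h1, @norm_add_sq_real, real_inner_smul_right, norm_smul]
      simp [Real.norm_eq_abs, abs_of_pos hl0]
      ring
    have hmz := hmin z hz
    rw [hinner_z, hnorm_z] at hmz
    have hdiv : h u ≤ ⟪c, y - u⟫ + 2 * A * ⟪u - a, y - u⟫ + A * l * ‖y - u‖ ^ 2 + h y := by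
      have hmul : l * h u ≤ l * (⟪c, y - u⟫ + 2 * A * ⟪u - a, y - u⟫
          + A * l * ‖y - u‖ ^ 2 + h y) := by nlinarith [hmz, hhz]
      exact le_of_mul_le_mul_left hmul hl0
    rw [hinner_y, hexp_y]
    nlinarith [hdiv, hlc]

/-- Corollary 2 (regret part): COLDQ with `α_t = μ·t` achieves `O(log T)` static
regret for `μ`-strongly convex losses, with explicit constants. -/
theorem coldq_log_static_regret_strongly_convex
    (p N T : ℕ) (hT : 1 ≤ T) (R D G μ : ℝ)
    (hR : 0 < R) (hμ : 0 < μ)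
    (𝒳 : Set (EuclideanSpace ℝ (Fin p)))
    (hXconv : Convex ℝ 𝒳)
    (hXbdd : ∀ x ∈ 𝒳, ∀ y ∈ 𝒳, ‖x - y‖ ≤ R)
    (f : ℕ → EuclideanSpace ℝ (Fin p) → ℝ)
    (gradf : ℕ → EuclideanSpace ℝ (Fin p) → EuclideanSpace ℝ (Fin p))
    (hgradD : ∀ t, ∀ x ∈ 𝒳, ‖gradf t x‖ ≤ D)
    (hstrong : ∀ t, ∀ x ∈ 𝒳, ∀ y ∈ 𝒳,
      f t x + ⟪gradf t x, y - x⟫ + μ * ‖y - x‖ ^ 2 ≤ f t y)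
    (g : ℕ → Fin N → EuclideanSpace ℝ (Fin p) → ℝ)
    (hgconv : ∀ t n, ConvexOn ℝ 𝒳 (g t n))
    (hgG : ∀ t n, ∀ x ∈ 𝒳, |g t n x| ≤ G)
    (α : ℕ → ℝ) (hα : ∀ t, α t = μ * t)
    (Q : ℕ → Fin N → ℝ) (hQnn : ∀ t n, 0 ≤ Q t n)
    (x : ℕ → EuclideanSpace ℝ (Fin p)) (hx1 : x 1 ∈ 𝒳)
    (hxX : ∀ t, 2 ≤ t → t ≤ T → x t ∈ 𝒳)
    (hxmin : ∀ t, 2 ≤ t → t ≤ T → ∀ y ∈ 𝒳,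
      ⟪gradf (t - 1) (x (t - 1)), x t - x (t - 1)⟫
          + α (t - 1) * ‖x t - x (t - 1)‖ ^ 2
          + ∑ n, Q (t - 1) n * max (g (t - 1) n (x t)) 0 ≤
        ⟪gradf (t - 1) (x (t - 1)), y - x (t - 1)⟫
          + α (t - 1) * ‖y - x (t - 1)‖ ^ 2
          + ∑ n, Q (t - 1) n * max (g (t - 1) n y) 0)
    (xstar : EuclideanSpace ℝ (Fin p)) (hxstarX : xstar ∈ 𝒳)
    (hxstarfeas : ∀ t, 1 ≤ t → t ≤ T → ∀ n, g t n xstar ≤ 0) :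
    ∑ t ∈ Finset.Icc 1 T, (f t (x t) - f t xstar) ≤
        (D ^ 2 / (4 * μ)) * ∑ t ∈ Finset.Icc 1 T, (1 / (t : ℝ)) + D * R ∧
      (D ^ 2 / (4 * μ)) * ∑ t ∈ Finset.Icc 1 T, (1 / (t : ℝ)) + D * R ≤
        (D ^ 2 / (4 * μ)) * (1 + Real.log T) + D * R := by
  have hD0 : 0 ≤ D := le_trans (norm_nonneg _) (hgradD 1 (x 1) hx1)
  have hDsq : (0:ℝ) ≤ D ^ 2 / (4 * μ) := by positivity
  have hxmem : ∀ t, 1 ≤ t → t ≤ T → x t ∈ 𝒳 := by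
    intro t h1 h2
    rcases Nat.lt_or_ge t 2 with h | h
    · have : t = 1 := by omega
      rwa [this]
    · exact hxX t h h2
  constructor
  · -- regret bound
    -- per-step key inequality for 1 ≤ t < T
    have key : ∀ t : ℕ, 1 ≤ t → t < T →
        f t (x t) - f t xstar ≤ D ^ 2 / (4 * μ) * (1 / (t : ℝ)) +
          (μ * ((t : ℝ) - 1) * ‖xstar - x t‖ ^ 2
            - μ * (t : ℝ) * ‖xstar - x (t + 1)‖ ^ 2) := by
      intro t h1 h2
      have ht0 : (0:ℝ) < (t : ℝ) := by exact_mod_cast h1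
      have hAt : (0:ℝ) < μ * (t : ℝ) := by positivity
      have hxt : x t ∈ 𝒳 := hxmem t h1 (le_of_lt h2)
      have hxt1 : x (t + 1) ∈ 𝒳 := hxX (t + 1) (by omega) (by omega)
      have hmin' := hxmin (t + 1) (by omega) (by omega)
      simp only [Nat.add_sub_cancel, hα] at hmin'
      set c := gradf t (x t) with hc
      set h' : EuclideanSpace ℝ (Fin p) → ℝ :=
        fun z => ∑ n, Q t n * max (g t n z) 0 with hh'
      -- convexity of the queue penalty along the segment from x (t+1) to xstar
      have hhconv : ∀ l : ℝ, 0 ≤ l → l ≤ 1 →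
          h' ((1 - l) • x (t + 1) + l • xstar) ≤ (1 - l) * h' (x (t + 1)) + l * h' xstar := by
        intro l hl0 hl1
        rw [hh']
        simp only
        rw [Finset.mul_sum, Finset.mul_sum, ← Finset.sum_add_distrib]
        refine Finset.sum_le_sum fun n _ => ?_
        have hgz := (hgconv t n).2 hxt1 hxstarX (by linarith : (0:ℝ) ≤ 1 - l) hl0 (by ring)
        have h1' : g t n (x (t + 1)) ≤ max (g t n (x (t + 1))) 0 := le_max_left _ _
        have h2' : g t n xstar ≤ max (g t n xstar) 0 := le_max_left _ _
        have h3' : (0:ℝ) ≤ max (g t n (x (t + 1))) 0 := le_max_right _ _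
        have h4' : (0:ℝ) ≤ max (g t n xstar) 0 := le_max_right _ _
        have hmaxle : max (g t n ((1 - l) • x (t + 1) + l • xstar)) 0 ≤
            (1 - l) * max (g t n (x (t + 1))) 0 + l * max (g t n xstar) 0 := by
          apply max_le
          · calc g t n ((1 - l) • x (t + 1) + l • xstar)
                ≤ (1 - l) • g t n (x (t + 1)) + l • g t n xstar := hgz
              _ ≤ (1 - l) * max (g t n (x (t + 1))) 0 + l * max (g t n xstar) 0 := by
                  simp only [smul_eq_mul]
                  gcongr <;> linarith
          · exact add_nonneg (mul_nonneg (by linarith) h3') (mul_nonneg hl0 h4')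
        calc Q t n * max (g t n ((1 - l) • x (t + 1) + l • xstar)) 0
            ≤ Q t n * ((1 - l) * max (g t n (x (t + 1))) 0 + l * max (g t n xstar) 0) :=
              mul_le_mul_of_nonneg_left hmaxle (hQnn t n)
          _ = (1 - l) * (Q t n * max (g t n (x (t + 1))) 0)
              + l * (Q t n * max (g t n xstar) 0) := by ring
      have hopt := strong_min_aux hXconv c (x t) (μ * (t : ℝ)) (le_of_lt hAt) h'
        (x (t + 1)) hxt1 xstar hxstarX hhconv hmin'
      -- queue terms
      have hqstar : h' xstar = 0 := by
        rw [hh']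
        refine Finset.sum_eq_zero fun n _ => ?_
        have := hxstarfeas t h1 (le_of_lt h2) n
        rw [max_eq_right this, mul_zero]
      have hqu : 0 ≤ h' (x (t + 1)) := by
        rw [hh']
        exact Finset.sum_nonneg fun n _ => mul_nonneg (hQnn t n) (le_max_right _ _)
      -- strong convexity at x t
      have hsc := hstrong t (x t) hxt xstar hxstarX
      -- Cauchy-Schwarz + AM-GM
      have hcs : -⟪c, x (t + 1) - x t⟫ ≤ ‖c‖ * ‖x (t + 1) - x t‖ := by
        have := abs_real_inner_le_norm c (x (t + 1) - x t)
        have := neg_abs_le ⟪c, x (t + 1) - x t⟫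
        linarith
      have hcD : ‖c‖ ≤ D := hgradD t (x t) hxt
      have hamgm : ‖c‖ * ‖x (t + 1) - x t‖ ≤
          D ^ 2 / (4 * (μ * (t : ℝ))) + μ * (t : ℝ) * ‖x (t + 1) - x t‖ ^ 2 := by
        set v := ‖x (t + 1) - x t‖ with hv
        have hv0 : 0 ≤ v := norm_nonneg _
        have hkey : 4 * (μ * (t : ℝ)) * (‖c‖ * v) ≤ D ^ 2 + 4 * (μ * (t:ℝ)) ^ 2 * v ^ 2 := by
          nlinarith [sq_nonneg (D - 2 * (μ * (t : ℝ)) * v), mul_nonneg hv0 (sub_nonneg.2 hcD),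
            hAt.le]
        rw [div_add' _ _ _ (by positivity : (4 : ℝ) * (μ * (t:ℝ)) ≠ 0),
          le_div_iff₀ (by positivity : (0:ℝ) < 4 * (μ * (t:ℝ)))]
        nlinarith [hkey]
      have hdivpow : D ^ 2 / (4 * μ) * (1 / (t : ℝ)) = D ^ 2 / (4 * (μ * (t : ℝ))) := by
        field_simp
      rw [hdivpow]
      rw [hqstar] at hopt
      linarith [hopt, hsc, hcs, hamgm, hqu]
    -- assemble the sum
    obtain ⟨S, rfl⟩ : ∃ S, T = S + 1 := ⟨T - 1, by omega⟩
    have hxT : x (S + 1) ∈ 𝒳 := hxmem (S + 1) (by omega) le_rfl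
    have hlast : f (S + 1) (x (S + 1)) - f (S + 1) xstar ≤ D * R := by
      have hsc := hstrong (S + 1) (x (S + 1)) hxT xstar hxstarX
      have hcs : -⟪gradf (S + 1) (x (S + 1)), xstar - x (S + 1)⟫ ≤
          ‖gradf (S + 1) (x (S + 1))‖ * ‖xstar - x (S + 1)‖ := by
        have h1' := abs_real_inner_le_norm (gradf (S + 1) (x (S + 1))) (xstar - x (S + 1))
        have h2' := neg_abs_le ⟪gradf (S + 1) (x (S + 1)), xstar - x (S + 1)⟫
        linarith
      have hnR : ‖xstar - x (S + 1)‖ ≤ R := hXbdd xstar hxstarX _ hxT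
      have hDR : ‖gradf (S + 1) (x (S + 1))‖ * ‖xstar - x (S + 1)‖ ≤ D * R :=
        mul_le_mul (hgradD _ _ hxT) hnR (norm_nonneg _) hD0
      nlinarith [sq_nonneg ‖xstar - x (S + 1)‖, hμ.le]
    rw [Finset.sum_Icc_succ_top (by omega : 1 ≤ S + 1)]
    have htel : ∑ t ∈ Finset.Icc 1 S, (μ * ((t : ℝ) - 1) * ‖xstar - x t‖ ^ 2
        - μ * (t : ℝ) * ‖xstar - x (t + 1)‖ ^ 2) ≤ 0 := by
      set ψ : ℕ → ℝ := fun i => μ * i * ‖xstar - x (i + 1)‖ ^ 2 with hψ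
      have heq : ∑ t ∈ Finset.Icc 1 S, (μ * ((t : ℝ) - 1) * ‖xstar - x t‖ ^ 2
          - μ * (t : ℝ) * ‖xstar - x (t + 1)‖ ^ 2) = ∑ i ∈ Finset.range S, (ψ i - ψ (i + 1)) := by
        rw [show Finset.Icc 1 S = Finset.Ico 1 (S + 1) from (Finset.Ico_add_one_right_eq_Icc ..).symm,
          Finset.sum_Ico_eq_sum_range]
        simp only [Nat.add_sub_cancel]
        refine Finset.sum_congr rfl fun i _ => ?_
        rw [Nat.add_comm 1 i]
        simp only [hψ]
        push_cast
        ring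
      have hψ0 : ψ 0 = 0 := by simp [hψ]
      have hψS : 0 ≤ ψ S := by
        simp only [hψ]
        positivity
      rw [heq, Finset.sum_range_sub' ψ S, hψ0]
      linarith
    have hsum1 : ∑ t ∈ Finset.Icc 1 S, (f t (x t) - f t xstar) ≤
        D ^ 2 / (4 * μ) * ∑ t ∈ Finset.Icc 1 S, (1 / (t : ℝ)) := by
      calc ∑ t ∈ Finset.Icc 1 S, (f t (x t) - f t xstar)
          ≤ ∑ t ∈ Finset.Icc 1 S, (D ^ 2 / (4 * μ) * (1 / (t : ℝ)) +
            (μ * ((t : ℝ) - 1) * ‖xstar - x t‖ ^ 2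
              - μ * (t : ℝ) * ‖xstar - x (t + 1)‖ ^ 2)) := by
            refine Finset.sum_le_sum fun t ht => ?_
            obtain ⟨h1', h2'⟩ := Finset.mem_Icc.mp ht
            exact key t h1' (by omega)
        _ = D ^ 2 / (4 * μ) * ∑ t ∈ Finset.Icc 1 S, (1 / (t : ℝ)) +
            ∑ t ∈ Finset.Icc 1 S, (μ * ((t : ℝ) - 1) * ‖xstar - x t‖ ^ 2
              - μ * (t : ℝ) * ‖xstar - x (t + 1)‖ ^ 2) := by
            rw [Finset.sum_add_distrib, Finset.mul_sum]
        _ ≤ D ^ 2 / (4 * μ) * ∑ t ∈ Finset.Icc 1 S, (1 / (t : ℝ)) := by linarith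
    have hmono : ∑ t ∈ Finset.Icc 1 S, (1 / (t : ℝ)) ≤
        ∑ t ∈ Finset.Icc 1 (S + 1), (1 / (t : ℝ)) :=
      Finset.sum_le_sum_of_subset_of_nonneg (Finset.Icc_subset_Icc_right (Nat.le_succ S))
        (fun i _ _ => by positivity)
    have := mul_le_mul_of_nonneg_left hmono hDsq
    linarith
  · have hharm : ∑ t ∈ Finset.Icc 1 T, (1 / (t : ℝ)) = ((harmonic T : ℚ) : ℝ) := by
      simp_rw [harmonic_eq_sum_Icc, Rat.cast_sum, Rat.cast_inv, Rat.cast_natCast, one_div]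
    have hlog : ∑ t ∈ Finset.Icc 1 T, (1 / (t : ℝ)) ≤ 1 + Real.log T := by
      rw [hharm]
      exact_mod_cast harmonic_le_one_add_log T
    have := mul_le_mul_of_nonneg_left hlog hDsq
    linarith
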